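/- Let A ⊆ ℤ⁺ be infinite and geometrically sparse, with strictly increasing enumeration (a_n)_{n=0}^∞. Then for any integers k, l ≥ 1 and r ∈ ℤ there exist s, t ≥ 0 such that for any (m̄,n̄) ∈ A(k,l,r), if max(m̄,n̄) − min(m̄,n̄) > t (maximum and minimum taken over all coordinates of both tuples), then (m̄,n̄) ∈ A(k,l,r,s). -/

import Mathlib

open Filter Pointwise

/-- The `k`-fold sumset `X + ⋯ + X` (`k` times) of a set of integers. -/
def kFold (X : Set ℤ) (k : ℕ) : Set ℤ :=
  {z : ℤ | ∃ f : Fin k → ℤ, (∀ i, f i ∈ X) ∧ z = ∑ i, f i}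

/-- `Σ_n(X) = ⋃_{k=1}^n k(X)`. -/
def sigmaSum (n : ℕ) (X : Set ℤ) : Set ℤ :=
  ⋃ k ∈ Finset.Icc 1 n, kFold X k

/-- `±A = {x ∈ ℤ : |x| ∈ A}`. -/
def pmSet (A : Set ℤ) : Set ℤ := {x : ℤ | |x| ∈ A}

/-- The lower asymptotic density of a set of naturals:
`liminf_{n → ∞} |A ∩ {1,…,n}| / n`. -/
noncomputable def lowerDensity (A : Set ℕ) : ℝ :=
  Filter.liminf (fun n : ℕ => (Set.ncard (A ∩ Set.Icc 1 n) : ℝ) / n) Filter.atTop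

/-- The set of naturals whose image in `ℤ` lies in `S`. -/
def intSetToNat (S : Set ℤ) : Set ℕ := {n : ℕ | (n : ℤ) ∈ S}

/-- `A ⊆ ℤ` is sufficiently sparse if `δ̲(Σ_n(±A) ∩ ℕ) = 0` for all `n ≥ 1`. -/
def SuffSparse (A : Set ℤ) : Prop :=
  ∀ n : ℕ, 1 ≤ n → lowerDensity (intSetToNat (sigmaSum n (pmSet A))) = 0

/-- A set `S` of (positive) reals is geometric if `{s/t : s, t ∈ S, t ≤ s}` is a closed
and discrete subset of `ℝ`. -/
def IsGeometric (S : Set ℝ) : Prop :=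
  IsClosed {x : ℝ | ∃ s ∈ S, ∃ t ∈ S, t ≤ s ∧ x = s / t} ∧
    DiscreteTopology {x : ℝ | ∃ s ∈ S, ∃ t ∈ S, t ≤ s ∧ x = s / t}

/-- `A ⊆ ℤ` is geometrically sparse if there is `f : A → ℝ⁺` with `f(A)` geometric and
`sup_{a ∈ A} |a − f(a)| < ∞`. -/
def GeomSparse (A : Set ℤ) : Prop :=
  ∃ f : ℤ → ℝ, (∀ a ∈ A, 0 < f a) ∧ IsGeometric (f '' A) ∧
    ∃ C : ℝ, ∀ a ∈ A, |(a : ℝ) - f a| ≤ C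

/-- `(m̄,n̄) ∈ A(k,l,r)`: `r + a_{m_1} + ⋯ + a_{m_k} = a_{n_1} + ⋯ + a_{n_l}`, where
`(a_i)` enumerates `A`. -/
def inRel (a : ℕ → ℤ) {k l : ℕ} (r : ℤ) (m : Fin k → ℕ) (n : Fin l → ℕ) : Prop :=
  r + ∑ i, a (m i) = ∑ j, a (n j)

/-- `(m̄,n̄) ∈ A(k,l,r,s)`: there are `s'` with `|s'| ≤ s` and proper subsets `I ⊊ [k]`,
`J ⊊ [l]`, not both empty, with `r + s' + Σ_{i∈I} a_{m_i} = Σ_{j∈J} a_{n_j}` and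
`Σ_{i∉I} a_{m_i} = s' + Σ_{j∉J} a_{n_j}`. -/
def inRelS (a : ℕ → ℤ) {k l : ℕ} (r s : ℤ) (m : Fin k → ℕ) (n : Fin l → ℕ) : Prop :=
  ∃ s' : ℤ, |s'| ≤ s ∧ ∃ (I : Finset (Fin k)) (J : Finset (Fin l)),
    I ≠ Finset.univ ∧ J ≠ Finset.univ ∧ (I.Nonempty ∨ J.Nonempty) ∧
    r + s' + ∑ i ∈ I, a (m i) = ∑ j ∈ J, a (n j) ∧
    ∑ i ∈ Iᶜ, a (m i) = s' + ∑ j ∈ Jᶜ, a (n j)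

theorem exists_isolation {V : Set ℝ} (hV : V.Finite) :
    ∃ δ : ℝ, 0 < δ ∧ ∀ v ∈ V, |v| < δ → v = 0 := by
  classical
  set W := (hV.toFinset.filter (· ≠ 0)).image abs with hW
  rcases Finset.eq_empty_or_nonempty W with h | h
  · refine ⟨1, one_pos, fun v hv _ => ?_⟩
    by_contra hne
    have : |v| ∈ W := Finset.mem_image_of_mem _ (Finset.mem_filter.2 ⟨hV.mem_toFinset.2 hv, hne⟩)
    simp [h] at this
  · refine ⟨W.min' h, ?_, fun v hv hlt => ?_⟩
    · obtain ⟨w, hw, hweq⟩ := Finset.mem_image.1 (W.min'_mem h)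
      have h1 := (Finset.mem_filter.1 hw).2
      have h2 : 0 < |w| := abs_pos.2 h1
      exact hweq ▸ h2
    · by_contra hne
      have : |v| ∈ W := Finset.mem_image_of_mem _ (Finset.mem_filter.2 ⟨hV.mem_toFinset.2 hv, hne⟩)
      exact absurd (W.min'_le _ this) (not_le.2 hlt)

theorem sm_le (a : ℕ → ℤ) (ha : StrictMono a) (n c : ℕ) : a n + c ≤ a (n + c) := by
  induction c with
  | zero => simp
  | succ c ih =>
    have h2 := ha (Nat.lt_succ_self (n + c))
    rw [← Nat.add_assoc]
    push_cast; push_cast at ih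
    have : a (n+c) + 1 ≤ a (n + c + 1) := h2
    linarith

def Vset (R : Set ℝ) (k l : ℕ) (x : ℝ) : Set ℝ :=
  {v | ∃ (c : Fin k → ℝ) (c' : Fin l → ℝ),
    (∀ i, c i = 0 ∨ ∃ ρ ∈ R ∩ Set.Icc 1 x, c i = ρ⁻¹) ∧
    (∀ j, c' j = 0 ∨ ∃ ρ ∈ R ∩ Set.Icc 1 x, c' j = ρ⁻¹) ∧
    v = (∑ i, c i) - (∑ j, c' j)}

theorem Vset_finite {R : Set ℝ} {k l : ℕ} {x : ℝ} (hfin : (R ∩ Set.Icc 1 x).Finite) :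
    (Vset R k l x).Finite := by
  classical
  set S0 : Set ℝ := insert 0 ((fun ρ => ρ⁻¹) '' (R ∩ Set.Icc 1 x)) with hS0
  have hS0fin : S0.Finite := (hfin.image _).insert 0
  have hsub : Vset R k l x ⊆
      (fun p : (Fin k → ℝ) × (Fin l → ℝ) => (∑ i, p.1 i) - (∑ j, p.2 j)) ''
        ((Set.pi Set.univ fun _ => S0) ×ˢ (Set.pi Set.univ fun _ => S0)) := by
    rintro v ⟨c, c', hc, hc', rfl⟩
    refine ⟨⟨c, c'⟩, ⟨?_, ?_⟩, rfl⟩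
    · intro i _
      rcases hc i with h | ⟨ρ, hρ, h⟩
      · show c i ∈ S0; rw [h]; exact Set.mem_insert _ _
      · show c i ∈ S0; rw [h]; exact Set.mem_insert_of_mem _ ⟨ρ, hρ, rfl⟩
    · intro j _
      rcases hc' j with h | ⟨ρ, hρ, h⟩
      · show c' j ∈ S0; rw [h]; exact Set.mem_insert _ _
      · show c' j ∈ S0; rw [h]; exact Set.mem_insert_of_mem _ ⟨ρ, hρ, rfl⟩
  exact Set.Finite.subset (Set.Finite.image _ ((Set.Finite.pi fun _ => hS0fin).prod
    (Set.Finite.pi fun _ => hS0fin))) hsub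

theorem pigeonhole_ann {α : Type*} [Fintype α] (N : ℕ) (hcard : Fintype.card α ≤ N)
    (ann : ℕ → Set ℝ) (hdisj : ∀ j j' y, j ≠ j' → y ∈ ann j → y ∉ ann j')
    (g : α → ℝ) : ∃ j ≤ N, ∀ p, g p ∉ ann j := by
  classical
  set T : Finset ℕ := (Finset.range (N + 1)).filter (fun j => ∃ p, g p ∈ ann j) with hT
  have hinj : T ⊆ Finset.image (fun p => if h : ∃ j, g p ∈ ann j then h.choose else N + 1)
      Finset.univ := by
    intro j hj
    obtain ⟨-, p, hp⟩ := Finset.mem_filter.1 hj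
    refine Finset.mem_image.2 ⟨p, Finset.mem_univ _, ?_⟩
    have hex : ∃ j, g p ∈ ann j := ⟨j, hp⟩
    rw [dif_pos hex]
    by_contra hne
    exact hdisj _ _ _ hne hex.choose_spec hp
  have hcardT : T.card ≤ N := le_trans (Finset.card_le_card hinj)
    (le_trans Finset.card_image_le (by simpa using hcard))
  have hns : ¬ Finset.range (N + 1) ⊆ T := by
    intro h
    have := Finset.card_le_card h
    simp only [Finset.card_range] at this
    omega
  obtain ⟨j, hj1, hj2⟩ := Finset.not_subset.1 hns
  refine ⟨j, Nat.lt_succ_iff.1 (Finset.mem_range.1 hj1), fun p hp => hj2 ?_⟩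
  exact Finset.mem_filter.2 ⟨hj1, p, hp⟩

theorem growth (f : ℤ → ℝ) (A : Set ℤ) (a : ℕ → ℤ) (ha : StrictMono a)
    (hmem : ∀ q, a q ∈ A) (C : ℝ)
    (hC : ∀ x ∈ A, |(x : ℝ) - f x| ≤ C) (lam : ℝ) (hlam1 : 1 < lam)
    (hlam : ∀ s ∈ f '' A, ∀ t ∈ f '' A, t < s → lam * t ≤ s)
    (D : ℕ) (hD : 2 * C + 1 ≤ (D : ℝ)) :
    ∀ d n' m', n' + D * (d + 1) ≤ m' → lam ^ (d + 1) * f (a n') ≤ f (a m') := by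
  have step : ∀ x ∈ A, ∀ y ∈ A, (x : ℝ) + 2 * C + 1 ≤ (y : ℝ) → lam * f x ≤ f y := by
    intro x hx y hy hxy
    have h1 := abs_le.1 (hC x hx)
    have h2 := abs_le.1 (hC y hy)
    have : f x < f y := by linarith [h1.1, h1.2, h2.1, h2.2]
    exact hlam _ ⟨y, hy, rfl⟩ _ ⟨x, hx, rfl⟩ this
  have key : ∀ n', lam * f (a n') ≤ f (a (n' + D)) := by
    intro n'
    have h1 : a n' + (D : ℤ) ≤ a (n' + D) := sm_le a ha n' D
    refine step _ (hmem n') _ (hmem (n' + D)) ?_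
    have : (a n' : ℝ) + (D : ℝ) ≤ (a (n' + D) : ℝ) := by exact_mod_cast h1
    linarith
  intro d
  induction d with
  | zero =>
    intro n' m' hle
    rw [Nat.mul_one] at hle
    have h1 : a (n' + D) ≤ a m' := ha.monotone hle
    have h2 : a n' + (D : ℤ) ≤ a (n' + D) := sm_le a ha n' D
    rw [zero_add, pow_one]
    refine step _ (hmem n') _ (hmem m') ?_
    have h3 : (a n' : ℝ) + (D : ℝ) ≤ (a m' : ℝ) := by
      have := h2.trans h1; exact_mod_cast this
    linarith
  | succ d ih =>
    intro n' m' hle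
    have h1 : (n' + D) + D * (d + 1) ≤ m' := by ring_nf; ring_nf at hle; omega
    have h2 := ih (n' + D) m' h1
    have h3 := key n'
    have hpow : (0 : ℝ) < lam ^ (d + 1) := pow_pos (lt_trans one_pos hlam1) _
    calc lam ^ (d + 1 + 1) * f (a n') = lam ^ (d + 1) * (lam * f (a n')) := by ring
      _ ≤ lam ^ (d + 1) * f (a (n' + D)) := by nlinarith
      _ ≤ f (a m') := h2


set_option maxHeartbeats 4000000 in
/-- For `A ⊆ ℤ⁺` infinite and geometrically sparse with strictly increasing
enumeration `(a_n)`, and `k, l ≥ 1`, `r ∈ ℤ`, there are `s, t ≥ 0` such that any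
`(m̄,n̄) ∈ A(k,l,r)` with `max(m̄,n̄) − min(m̄,n̄) > t` lies in `A(k,l,r,s)`. -/
theorem inRelS_of_large_spread (A : Set ℤ) (hApos : ∀ x ∈ A, 0 < x) (hGS : GeomSparse A)
    (a : ℕ → ℤ) (ha : StrictMono a) (hrange : Set.range a = A)
    (k l : ℕ) (hk : 1 ≤ k) (hl : 1 ≤ l) (r : ℤ) :
    ∃ s t : ℕ, ∀ (m : Fin k → ℕ) (n : Fin l → ℕ), inRel a r m n →
      t < sSup (Set.range m ∪ Set.range n) - sInf (Set.range m ∪ Set.range n) →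
      inRelS a r (s : ℤ) m n := by
  classical
  obtain ⟨f, hfpos, ⟨hclosed, hdiscrete⟩, C0, hC00⟩ := hGS
  set S : Set ℝ := f '' A with hSdef
  set R : Set ℝ := {x : ℝ | ∃ s ∈ S, ∃ t ∈ S, t ≤ s ∧ x = s / t} with hRdef
  set C : ℝ := max C0 1 with hCdef
  have hC : ∀ x ∈ A, |(x : ℝ) - f x| ≤ C := fun x hx => (hC00 x hx).trans (le_max_left _ _)
  have hC1 : (1 : ℝ) ≤ C := le_max_right _ _
  have hmem : ∀ q, a q ∈ A := fun q => hrange ▸ Set.mem_range_self q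
  have hfposa : ∀ q, 0 < f (a q) := fun q => hfpos _ (hmem q)
  have hfub : ∀ q, (a q : ℝ) - C ≤ f (a q) ∧ f (a q) ≤ (a q : ℝ) + C := by
    intro q
    have := abs_le.1 (hC _ (hmem q))
    constructor <;> linarith [this.1, this.2]
  have Rfin : ∀ x : ℝ, (R ∩ Set.Icc 1 x).Finite := by
    intro x
    have hK : IsCompact (R ∩ Set.Icc 1 x) := (isCompact_Icc).inter_left hclosed
    have : DiscreteTopology (R ∩ Set.Icc 1 x : Set ℝ) :=
      DiscreteTopology.of_subset hdiscrete Set.inter_subset_left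
    exact hK.finite (isDiscrete_iff_discreteTopology.mpr this)
  -- existence of lambda
  have hlamex : ∃ lam : ℝ, 1 < lam ∧ ∀ ρ ∈ R, 1 < ρ → lam ≤ ρ := by
    obtain ⟨nb, hnb⟩ := exists_nat_gt (f (a 0) + C - (a 0 : ℝ))
    have h1 : (a 0 : ℤ) + (nb : ℤ) ≤ a nb := sm_le a ha 0 nb |>.trans_eq (by rw [Nat.zero_add])
    have h2 : f (a 0) + C < (a nb : ℝ) := by
      have : (a 0 : ℝ) + (nb : ℝ) ≤ (a nb : ℝ) := by exact_mod_cast h1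
      linarith
    have h3 : f (a 0) < f (a nb) := by linarith [(hfub nb).1]
    set ρ0 : ℝ := f (a nb) / f (a 0) with hρ0
    have hρ0R : ρ0 ∈ R := ⟨f (a nb), ⟨a nb, hmem nb, rfl⟩, f (a 0), ⟨a 0, hmem 0, rfl⟩, h3.le, rfl⟩
    have hρ0gt : 1 < ρ0 := (one_lt_div (hfposa 0)).2 h3
    have hGfin : (R ∩ Set.Ioc 1 ρ0).Finite :=
      (Rfin ρ0).subset (Set.inter_subset_inter_right _ Set.Ioc_subset_Icc_self)
    have hGne : ρ0 ∈ R ∩ Set.Ioc 1 ρ0 := ⟨hρ0R, hρ0gt, le_refl _⟩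
    set G := hGfin.toFinset with hG
    have hGne' : G.Nonempty := ⟨ρ0, hGfin.mem_toFinset.2 hGne⟩
    refine ⟨G.min' hGne', ?_, ?_⟩
    · have := hGfin.mem_toFinset.1 (G.min'_mem hGne')
      exact this.2.1
    · intro ρ hρ hρ1
      rcases le_total ρ ρ0 with h | h
      · exact G.min'_le _ (hGfin.mem_toFinset.2 ⟨hρ, hρ1, h⟩)
      · exact le_trans (G.min'_le _ (hGfin.mem_toFinset.2 hGne)) h
  obtain ⟨lam, hlam1, hlamle⟩ := hlamex
  have hlamS : ∀ s ∈ S, ∀ t ∈ S, t < s → lam * t ≤ s := by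
    rintro s ⟨xs, hxs, rfl⟩ t ⟨xt, hxt, rfl⟩ hts
    have htpos : 0 < f xt := hfpos _ hxt
    have hρR : f xs / f xt ∈ R := ⟨f xs, ⟨xs, hxs, rfl⟩, f xt, ⟨xt, hxt, rfl⟩, hts.le, rfl⟩
    have h1 : 1 < f xs / f xt := (one_lt_div htpos).2 hts
    have := hlamle _ hρR h1
    rw [le_div_iff₀ htpos] at this
    linarith
  -- lower bound m₀ for f on A
  have hm0ex : ∃ m0 : ℝ, 0 < m0 ∧ ∀ x ∈ A, m0 ≤ f x := by
    set z0 : ℤ := ⌈C + 1⌉ with hz0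
    have hBfin : (A ∩ Set.Icc 1 z0).Finite :=
      (Set.finite_Icc (1 : ℤ) z0).subset Set.inter_subset_right
    have hIfin : (f '' (A ∩ Set.Icc 1 z0)).Finite := hBfin.image f
    have hbig : ∀ x ∈ A, z0 < x → 1 ≤ f x := by
      intro x hx hxz
      have h1 : C + 1 ≤ (z0 : ℝ) := Int.le_ceil _
      have h2 : (z0 : ℝ) + 1 ≤ (x : ℝ) := by exact_mod_cast hxz
      have := abs_le.1 (hC x hx)
      linarith [this.2]
    rcases Finset.eq_empty_or_nonempty hIfin.toFinset with h | h
    · refine ⟨1, one_pos, fun x hx => ?_⟩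
      rcases le_or_gt x z0 with hle | hlt
      · exfalso
        have : f x ∈ hIfin.toFinset := hIfin.mem_toFinset.2 ⟨x, ⟨hx, hApos x hx, hle⟩, rfl⟩
        rw [h] at this
        exact absurd this (Finset.notMem_empty _)
      · exact hbig x hx hlt
    · refine ⟨min 1 (hIfin.toFinset.min' h), ?_, ?_⟩
      · refine lt_min one_pos ?_
        obtain ⟨w, hw, hweq⟩ := hIfin.mem_toFinset.1 (hIfin.toFinset.min'_mem h)
        exact hweq ▸ hfpos _ hw.1
      · intro x hx
        rcases le_or_gt x z0 with hle | hlt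
        · exact le_trans (min_le_right _ _)
            (hIfin.toFinset.min'_le _ (hIfin.mem_toFinset.2 ⟨x, ⟨hx, hApos x hx, hle⟩, rfl⟩))
        · exact le_trans (min_le_left _ _) (hbig x hx hlt)
  obtain ⟨m0, hm0pos, hm0le⟩ := hm0ex
  -- parameters
  set D : ℕ := ⌈(2 * C + 1 : ℝ)⌉₊ with hDdef
  have hD : (2 * C + 1 : ℝ) ≤ (D : ℝ) := Nat.le_ceil _
  set N : ℕ := k + l with hNdef
  have hN2 : 2 ≤ N := by omega
  set C1 : ℝ := |(r : ℝ)| + N * C with hC1def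
  have hC1pos : 0 < C1 := by
    have : (2 : ℝ) ≤ (N : ℝ) := by exact_mod_cast hN2
    have h2 := abs_nonneg (r : ℝ)
    nlinarith
  -- delta and X recursion
  have hdelta : ∀ x : ℝ, ∃ δ : ℝ, 0 < δ ∧ ∀ v ∈ Vset R k l x, |v| < δ → v = 0 :=
    fun x => exists_isolation (Vset_finite (Rfin x))
  choose del hdelpos hdel0 using hdelta
  set X : ℕ → ℝ := fun j => Nat.rec 1 (fun _ xj => max (xj + 1) (4 * N / del xj)) j with hXdef
  have hXs : ∀ j, X (j + 1) = max (X j + 1) (4 * N / del (X j)) := fun j => rfl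
  have hXsucc : ∀ j, X j + 1 ≤ X (j + 1) := fun j => (hXs j) ▸ le_max_left _ _
  have hX1 : ∀ j, 1 ≤ X j := by
    intro j
    induction j with
    | zero => exact le_refl _
    | succ j ih => linarith [hXsucc j]
  have hXmono : Monotone X := monotone_nat_of_le_succ (fun j => by linarith [hXsucc j])
  have hXgt1 : ∀ j, 1 < X (j + 1) := fun j => by linarith [hXsucc j, hX1 j]
  have hX4N : ∀ j, 4 * N / del (X j) ≤ X (j + 1) := fun j => (hXs j) ▸ le_max_right _ _
  -- delta min
  set dmF := (Finset.range (N + 1)).image (fun j => del (X j)) with hdmF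
  have hdmFne : dmF.Nonempty := ⟨del (X 0), Finset.mem_image.2 ⟨0, by simp, rfl⟩⟩
  set dm : ℝ := dmF.min' hdmFne with hdm
  have hdmpos : 0 < dm := by
    obtain ⟨j, -, hj⟩ := Finset.mem_image.1 (dmF.min'_mem hdmFne)
    exact lt_of_lt_of_eq (hdelpos (X j)) hj
  have hdmle : ∀ j ≤ N, dm ≤ del (X j) := fun j hj =>
    dmF.min'_le _ (Finset.mem_image.2 ⟨j, Finset.mem_range.2 (Nat.lt_succ_of_le hj), rfl⟩)
  set Fb : ℝ := 4 * C1 / dm with hFb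
  have hFbpos : 0 < Fb := by positivity
  obtain ⟨d, hd⟩ := pow_unbounded_of_one_lt (max (X (N + 1)) (Fb / m0)) hlam1
  have hlampos : (0 : ℝ) < lam := lt_trans one_pos hlam1
  have hXd : X (N + 1) ≤ lam ^ (d + 1) := by
    have h1 : X (N + 1) ≤ lam ^ d := ((le_max_left _ _).trans hd.le)
    have h2 : lam ^ d ≤ lam ^ (d + 1) := pow_le_pow_right₀ hlam1.le (Nat.le_succ d)
    linarith
  have hFbd : Fb / m0 ≤ lam ^ (d + 1) := by
    have h1 : Fb / m0 ≤ lam ^ d := ((le_max_right _ _).trans hd.le)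
    have h2 : lam ^ d ≤ lam ^ (d + 1) := pow_le_pow_right₀ hlam1.le (Nat.le_succ d)
    linarith
  refine ⟨⌈(N : ℝ) * C⌉₊, D * (d + 1), ?_⟩
  intro m n hrel hsp
  haveI : Nonempty (Fin k) := ⟨⟨0, hk⟩⟩
  haveI : Nonempty (Fin l) := ⟨⟨0, hl⟩⟩
  set U : Set ℕ := Set.range m ∪ Set.range n with hU
  have hUne : U.Nonempty := ⟨m ⟨0, hk⟩, Or.inl ⟨⟨0, hk⟩, rfl⟩⟩
  have hUfin : U.Finite := (Set.finite_range m).union (Set.finite_range n)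
  set M : ℕ := sSup U with hM
  set μ : ℕ := sInf U with hμ
  have hMU : M ∈ U := Nat.sSup_mem hUne hUfin.bddAbove
  have hμU : μ ∈ U := Nat.sInf_mem hUne
  have hspread : μ + D * (d + 1) ≤ M := by
    have := lt_tsub_iff_right.mp hsp
    omega
  have hgrow : lam ^ (d + 1) * f (a μ) ≤ f (a M) :=
    growth f A a ha hmem C hC lam hlam1 hlamS D hD d μ M hspread
  -- max F of the f-values of the tuple
  set fm : Fin k → ℝ := fun i => f (a (m i)) with hfm
  set fn : Fin l → ℝ := fun j => f (a (n j)) with hfn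
  set Fm : ℝ := Finset.univ.sup' Finset.univ_nonempty fm with hFm
  set Fn : ℝ := Finset.univ.sup' Finset.univ_nonempty fn with hFn
  set F : ℝ := max Fm Fn with hF
  have hfmF : ∀ i, fm i ≤ F := fun i =>
    (Finset.le_sup' fm (Finset.mem_univ i)).trans (le_max_left _ _)
  have hfnF : ∀ j, fn j ≤ F := fun j =>
    (Finset.le_sup' fn (Finset.mem_univ j)).trans (le_max_right _ _)
  obtain ⟨iF, -, hiF⟩ := Finset.exists_mem_eq_sup' (Finset.univ_nonempty) fm
  obtain ⟨jF, -, hjF⟩ := Finset.exists_mem_eq_sup' (Finset.univ_nonempty) fn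
  have hFcases : (∃ i, fm i = F) ∨ (∃ j, fn j = F) := by
    rcases le_total Fn Fm with h | h
    · exact Or.inl ⟨iF, by rw [← hiF, hF, max_eq_left h]⟩
    · exact Or.inr ⟨jF, by rw [← hjF, hF, max_eq_right h]⟩
  have hFS : F ∈ S := by
    rcases hFcases with ⟨i, hi⟩ | ⟨j, hj⟩
    · exact hi ▸ ⟨a (m i), hmem _, rfl⟩
    · exact hj ▸ ⟨a (n j), hmem _, rfl⟩
  have hFpos : 0 < F := lt_of_lt_of_le (hfposa (m ⟨0, hk⟩)) (hfmF ⟨0, hk⟩)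
  have hFM : f (a M) ≤ F := by
    rcases hMU with ⟨i, hi⟩ | ⟨j, hj⟩
    · exact hi ▸ hfmF i
    · exact hj ▸ hfnF j
  have hμM : lam ^ (d + 1) * f (a μ) ≤ F := hgrow.trans hFM
  have hFbig : Fb ≤ F := by
    have h1 : Fb / m0 * m0 ≤ lam ^ (d + 1) * m0 :=
      mul_le_mul_of_nonneg_right hFbd hm0pos.le
    rw [div_mul_cancel₀ _ (ne_of_gt hm0pos)] at h1
    have h2 : lam ^ (d + 1) * m0 ≤ lam ^ (d + 1) * f (a μ) :=
      mul_le_mul_of_nonneg_left (hm0le _ (hmem μ)) (pow_pos hlampos _).le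
    linarith
  have hFbpos' : 0 < F := hFpos
  have hμsm : f (a μ) * X (N + 1) ≤ F := by
    have h1 : f (a μ) * X (N + 1) ≤ f (a μ) * lam ^ (d + 1) :=
      mul_le_mul_of_nonneg_left hXd (hfposa μ).le
    linarith [hμM]
  -- pigeonhole on annuli
  set ann : ℕ → Set ℝ := fun j => Set.Ioc (F / X (j + 1)) (F / X j) with hann
  have hdisj : ∀ j j' y, j ≠ j' → y ∈ ann j → y ∉ ann j' := by
    have key : ∀ j1 j2 y, j1 < j2 → y ∈ ann j1 → y ∉ ann j2 := by
      intro j1 j2 y hjj' hy hy'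
      have hpos1 : (0:ℝ) < X (j1 + 1) := by linarith [hX1 (j1+1)]
      have h1 : F / X j2 ≤ F / X (j1 + 1) :=
        div_le_div_of_nonneg_left hFpos.le hpos1 (hXmono hjj')
      have h2 : F / X (j1 + 1) < y := hy.1
      have h3 : y ≤ F / X j2 := hy'.2
      linarith
    intro j1 j2 y hne hy hy'
    rcases Nat.lt_or_ge j1 j2 with h | h
    · exact key j1 j2 y h hy hy'
    · have h2 : j2 < j1 := by omega
      exact key j2 j1 y h2 hy' hy
  obtain ⟨j, hjN, hannp⟩ := pigeonhole_ann N (by simp [hNdef]) ann hdisj (Sum.elim fm fn)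
  have hannm : ∀ i, fm i ∉ ann j := fun i => hannp (Sum.inl i)
  have hannn : ∀ jj, fn jj ∉ ann j := fun jj => hannp (Sum.inr jj)
  have hXjpos : (0:ℝ) < X j := by linarith [hX1 j]
  have hXj1pos : (0:ℝ) < X (j + 1) := by linarith [hX1 (j+1)]
  set Bigm : Finset (Fin k) := Finset.univ.filter (fun i => F / X (j + 1) < fm i) with hBigm
  set Bign : Finset (Fin l) := Finset.univ.filter (fun jj => F / X (j + 1) < fn jj) with hBign
  -- each big value gives a ratio in R ∩ [1, X j]
  have hRhom : ∀ i ∈ Bigm, ∃ ρ ∈ R ∩ Set.Icc 1 (X j), fm i / F = ρ⁻¹ := by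
    intro i hi
    have hbig : F / X (j + 1) < fm i := (Finset.mem_filter.1 hi).2
    have hnot := hannm i
    simp only [hann, Set.mem_Ioc, not_and, not_le] at hnot
    have hgap : F / X j < fm i := hnot hbig
    have hfmpos : 0 < fm i := hfposa _
    refine ⟨F / fm i, ⟨⟨F, hFS, fm i, ⟨a (m i), hmem _, rfl⟩, hfmF i, rfl⟩, ?_, ?_⟩, ?_⟩
    · exact (one_le_div hfmpos).2 (hfmF i)
    · rw [div_le_iff₀ hfmpos]
      rw [div_lt_iff₀ hXjpos] at hgap
      linarith
    · rw [inv_div]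
  have hRhon : ∀ jj ∈ Bign, ∃ ρ ∈ R ∩ Set.Icc 1 (X j), fn jj / F = ρ⁻¹ := by
    intro jj hjj
    have hbig : F / X (j + 1) < fn jj := (Finset.mem_filter.1 hjj).2
    have hnot := hannn jj
    simp only [hann, Set.mem_Ioc, not_and, not_le] at hnot
    have hgap : F / X j < fn jj := hnot hbig
    have hfnpos : 0 < fn jj := hfposa _
    refine ⟨F / fn jj, ⟨⟨F, hFS, fn jj, ⟨a (n jj), hmem _, rfl⟩, hfnF jj, rfl⟩, ?_, ?_⟩, ?_⟩
    · exact (one_le_div hfnpos).2 (hfnF jj)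
    · rw [div_le_iff₀ hfnpos]
      rw [div_lt_iff₀ hXjpos] at hgap
      linarith
    · rw [inv_div]
  -- v and its membership in Vset
  set v : ℝ := ((∑ i ∈ Bigm, fm i) - (∑ jj ∈ Bign, fn jj)) / F with hv
  have hvV : v ∈ Vset R k l (X j) := by
    refine ⟨fun i => if i ∈ Bigm then fm i / F else 0,
      fun jj => if jj ∈ Bign then fn jj / F else 0, ?_, ?_, ?_⟩
    · intro i
      by_cases hi : i ∈ Bigm
      · obtain ⟨ρ, hρ, hρeq⟩ := hRhom i hi
        exact Or.inr ⟨ρ, hρ, by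
          show (if i ∈ Bigm then fm i / F else 0) = ρ⁻¹
          rw [if_pos hi]; exact hρeq⟩
      · exact Or.inl (by
          show (if i ∈ Bigm then fm i / F else 0) = 0
          rw [if_neg hi])
    · intro jj
      by_cases hjj : jj ∈ Bign
      · obtain ⟨ρ, hρ, hρeq⟩ := hRhon jj hjj
        exact Or.inr ⟨ρ, hρ, by
          show (if jj ∈ Bign then fn jj / F else 0) = ρ⁻¹
          rw [if_pos hjj]; exact hρeq⟩
      · exact Or.inl (by
          show (if jj ∈ Bign then fn jj / F else 0) = 0
          rw [if_neg hjj])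
    · have e1 : (∑ i, if i ∈ Bigm then fm i / F else 0) = ∑ i ∈ Bigm, fm i / F := by
        simp [Finset.sum_ite_mem]
      have e2 : (∑ jj, if jj ∈ Bign then fn jj / F else 0) = ∑ jj ∈ Bign, fn jj / F := by
        simp [Finset.sum_ite_mem]
      rw [e1, e2, ← Finset.sum_div, ← Finset.sum_div, hv, sub_div]
  -- bound on the total signed sum
  have hT : |(∑ i, fm i) - (∑ jj, fn jj)| ≤ C1 := by
    have hrelR : (r : ℝ) + ∑ i, (a (m i) : ℝ) = ∑ jj, (a (n jj) : ℝ) := by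
      have := hrel
      unfold inRel at this
      exact_mod_cast congrArg (fun z : ℤ => (z : ℝ)) this
    have hsplit : (∑ i, fm i) - (∑ jj, fn jj) =
        (∑ i, (fm i - (a (m i) : ℝ))) - (∑ jj, (fn jj - (a (n jj) : ℝ))) - (r : ℝ) := by
      rw [Finset.sum_sub_distrib, Finset.sum_sub_distrib]
      linarith
    have hb1 : |∑ i, (fm i - (a (m i) : ℝ))| ≤ k * C := by
      refine (Finset.abs_sum_le_sum_abs _ _).trans ?_
      have : ∀ i ∈ Finset.univ, |fm i - (a (m i) : ℝ)| ≤ C := by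
        intro i _
        rw [abs_sub_comm]
        exact hC _ (hmem _)
      calc ∑ i, |fm i - (a (m i) : ℝ)| ≤ Finset.univ.card • C := Finset.sum_le_card_nsmul _ _ _ this
        _ = k * C := by simp [nsmul_eq_mul]
    have hb2 : |∑ jj, (fn jj - (a (n jj) : ℝ))| ≤ l * C := by
      refine (Finset.abs_sum_le_sum_abs _ _).trans ?_
      have : ∀ jj ∈ Finset.univ, |fn jj - (a (n jj) : ℝ)| ≤ C := by
        intro jj _
        rw [abs_sub_comm]
        exact hC _ (hmem _)
      calc ∑ jj, |fn jj - (a (n jj) : ℝ)| ≤ Finset.univ.card • C :=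
            Finset.sum_le_card_nsmul _ _ _ this
        _ = l * C := by simp [nsmul_eq_mul]
    have hNC : (N : ℝ) * C = k * C + l * C := by
      rw [hNdef]; push_cast; ring
    rw [hsplit, hC1def, hNC]
    have h1 := abs_le.1 hb1
    have h2 := abs_le.1 hb2
    have h3 := le_abs_self (r : ℝ)
    have h4 := neg_abs_le (r : ℝ)
    rw [abs_le]
    constructor <;> linarith [h1.1, h1.2, h2.1, h2.2]
  -- bound the small sums
  have hXj1ne : X (j + 1) ≠ 0 := ne_of_gt hXj1pos
  have hFne : F ≠ 0 := ne_of_gt hFpos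
  have hsm_le : ∑ i ∈ Bigmᶜ, fm i ≤ (k : ℝ) * (F / X (j + 1)) := by
    have hterm : ∀ i ∈ Bigmᶜ, fm i ≤ F / X (j + 1) := by
      intro i hi
      have h1 : ¬ (F / X (j + 1) < fm i) := fun hcon =>
        (Finset.mem_compl.1 hi) (Finset.mem_filter.2 ⟨Finset.mem_univ _, hcon⟩)
      exact not_lt.1 h1
    have h2 := Finset.sum_le_card_nsmul _ _ _ hterm
    have h3 : (Bigmᶜ.card : ℝ) ≤ (k : ℝ) := by
      have h5 : Bigmᶜ.card ≤ k := by simpa using Finset.card_le_univ (Bigmᶜ)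
      exact_mod_cast h5
    have h4 : (0:ℝ) ≤ F / X (j + 1) := le_of_lt (div_pos hFpos hXj1pos)
    calc ∑ i ∈ Bigmᶜ, fm i ≤ Bigmᶜ.card • (F / X (j + 1)) := h2
      _ = (Bigmᶜ.card : ℝ) * (F / X (j + 1)) := by rw [nsmul_eq_mul]
      _ ≤ (k : ℝ) * (F / X (j + 1)) := mul_le_mul_of_nonneg_right h3 h4
  have hsn_le : ∑ jj ∈ Bignᶜ, fn jj ≤ (l : ℝ) * (F / X (j + 1)) := by
    have hterm : ∀ jj ∈ Bignᶜ, fn jj ≤ F / X (j + 1) := by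
      intro jj hjj
      have h1 : ¬ (F / X (j + 1) < fn jj) := fun hcon =>
        (Finset.mem_compl.1 hjj) (Finset.mem_filter.2 ⟨Finset.mem_univ _, hcon⟩)
      exact not_lt.1 h1
    have h2 := Finset.sum_le_card_nsmul _ _ _ hterm
    have h3 : (Bignᶜ.card : ℝ) ≤ (l : ℝ) := by
      have h5 : Bignᶜ.card ≤ l := by simpa using Finset.card_le_univ (Bignᶜ)
      exact_mod_cast h5
    have h4 : (0:ℝ) ≤ F / X (j + 1) := le_of_lt (div_pos hFpos hXj1pos)
    calc ∑ jj ∈ Bignᶜ, fn jj ≤ Bignᶜ.card • (F / X (j + 1)) := h2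
      _ = (Bignᶜ.card : ℝ) * (F / X (j + 1)) := by rw [nsmul_eq_mul]
      _ ≤ (l : ℝ) * (F / X (j + 1)) := mul_le_mul_of_nonneg_right h3 h4
  have hsm_nn : (0:ℝ) ≤ ∑ i ∈ Bigmᶜ, fm i :=
    Finset.sum_nonneg (fun i _ => (hfposa _).le)
  have hsn_nn : (0:ℝ) ≤ ∑ jj ∈ Bignᶜ, fn jj :=
    Finset.sum_nonneg (fun jj _ => (hfposa _).le)
  -- numerator identity and bound
  have hnum : (∑ i ∈ Bigm, fm i) - (∑ jj ∈ Bign, fn jj) =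
      ((∑ i, fm i) - (∑ jj, fn jj)) - (∑ i ∈ Bigmᶜ, fm i) + (∑ jj ∈ Bignᶜ, fn jj) := by
    have em := Finset.sum_compl_add_sum Bigm fm
    have en := Finset.sum_compl_add_sum Bign fn
    linarith
  have hnumabs : |(∑ i ∈ Bigm, fm i) - (∑ jj ∈ Bign, fn jj)| ≤
      C1 + (N : ℝ) * (F / X (j + 1)) := by
    have h1 := abs_le.1 hT
    have hNk : (N : ℝ) = (k : ℝ) + (l : ℝ) := by rw [hNdef]; push_cast; ring
    have hNmul : (N : ℝ) * (F / X (j + 1)) =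
        (k : ℝ) * (F / X (j + 1)) + (l : ℝ) * (F / X (j + 1)) := by rw [hNk]; ring
    rw [hnum, abs_le]
    constructor <;> linarith [h1.1, h1.2]
  have hvbound : |v| ≤ C1 / F + (N : ℝ) / X (j + 1) := by
    rw [hv, abs_div, abs_of_pos hFpos]
    rw [div_le_iff₀ hFpos]
    have hiden : (C1 / F + (N : ℝ) / X (j + 1)) * F = C1 + (N : ℝ) * (F / X (j + 1)) := by
      field_simp
    rw [hiden]
    exact hnumabs
  have hC1F : C1 / F ≤ dm / 4 := by
    have h1 : C1 / F ≤ C1 / Fb := div_le_div_of_nonneg_left hC1pos.le hFbpos hFbig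
    have h2 : C1 / Fb = dm / 4 := by
      rw [hFb, div_div_eq_mul_div, mul_comm (4:ℝ) C1,
        mul_div_mul_left _ _ (ne_of_gt hC1pos)]
    linarith
  have hNX : (N : ℝ) / X (j + 1) ≤ del (X j) / 4 := by
    have h1 : 4 * (N:ℝ) ≤ X (j + 1) * del (X j) := by
      have := hX4N j
      rw [div_le_iff₀ (hdelpos _)] at this
      exact this
    rw [div_le_div_iff₀ hXj1pos (by norm_num : (0:ℝ) < 4)]
    linarith
  have hvsmall : |v| < del (X j) := by
    have h1 := hdmle j hjN
    have h2 := hdelpos (X j)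
    linarith
  have hv0 : v = 0 := hdel0 (X j) v hvV hvsmall
  have hcancel : ∑ i ∈ Bigm, fm i = ∑ jj ∈ Bign, fn jj := by
    have hv0' := hv0
    rw [hv, div_eq_zero_iff] at hv0'
    rcases hv0' with h | h
    · linarith
    · exact absurd h hFne
  -- both Big sets nonempty
  have hBigboth : Bigm.Nonempty ∧ Bign.Nonempty := by
    rcases hFcases with ⟨i0, hi0⟩ | ⟨j0, hj0⟩
    · have him : i0 ∈ Bigm := Finset.mem_filter.2 ⟨Finset.mem_univ _, by
        rw [hi0]; exact div_lt_self hFpos (hXgt1 j)⟩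
      refine ⟨⟨i0, him⟩, ?_⟩
      by_contra hne
      rw [Finset.not_nonempty_iff_eq_empty] at hne
      rw [hne, Finset.sum_empty] at hcancel
      have hle : fm i0 ≤ ∑ i ∈ Bigm, fm i := Finset.single_le_sum (fun i _ => (hfposa _).le) him
      rw [hcancel, hi0] at hle
      linarith
    · have hjn : j0 ∈ Bign := Finset.mem_filter.2 ⟨Finset.mem_univ _, by
        rw [hj0]; exact div_lt_self hFpos (hXgt1 j)⟩
      refine ⟨?_, ⟨j0, hjn⟩⟩
      by_contra hne
      rw [Finset.not_nonempty_iff_eq_empty] at hne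
      rw [hne, Finset.sum_empty] at hcancel
      have hle : fn j0 ≤ ∑ jj ∈ Bign, fn jj := Finset.single_le_sum (fun jj _ => (hfposa _).le) hjn
      rw [← hcancel, hj0] at hle
      linarith
  obtain ⟨hBm, hBn⟩ := hBigboth
  -- the position realizing the min index is small
  have hμval : f (a μ) ≤ F / X (j + 1) := by
    rw [le_div_iff₀ hXj1pos]
    have h1 : f (a μ) * X (j + 1) ≤ f (a μ) * X (N + 1) :=
      mul_le_mul_of_nonneg_left (hXmono (Nat.succ_le_succ hjN)) (hfposa μ).le
    linarith
  have hor : (Bigmᶜ : Finset (Fin k)).Nonempty ∨ (Bignᶜ : Finset (Fin l)).Nonempty := by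
    rcases hμU with ⟨i, hi⟩ | ⟨jj, hjj⟩
    · left
      refine ⟨i, Finset.mem_compl.2 (fun hin => ?_)⟩
      have h1 : F / X (j + 1) < fm i := (Finset.mem_filter.1 hin).2
      have h2 : fm i = f (a μ) := by rw [hfm]; simp only []; rw [hi]
      rw [h2] at h1
      linarith
    · right
      refine ⟨jj, Finset.mem_compl.2 (fun hin => ?_)⟩
      have h1 : F / X (j + 1) < fn jj := (Finset.mem_filter.1 hin).2
      have h2 : fn jj = f (a μ) := by rw [hfn]; simp only []; rw [hjj]
      rw [h2] at h1
      linarith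
  -- assemble
  set s' : ℤ := (∑ i ∈ Bigm, a (m i)) - ∑ jj ∈ Bign, a (n jj) with hs'
  have habs : |s'| ≤ ((⌈(N : ℝ) * C⌉₊ : ℕ) : ℤ) := by
    have hcast : ((s' : ℤ) : ℝ) =
        (∑ i ∈ Bigm, ((a (m i) : ℝ) - fm i)) - (∑ jj ∈ Bign, ((a (n jj) : ℝ) - fn jj)) := by
      rw [Finset.sum_sub_distrib, Finset.sum_sub_distrib, hs']
      push_cast
      linarith
    have hb1 : |∑ i ∈ Bigm, ((a (m i) : ℝ) - fm i)| ≤ (k : ℝ) * C := by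
      refine (Finset.abs_sum_le_sum_abs _ _).trans ?_
      have hterm : ∀ i ∈ Bigm, |(a (m i) : ℝ) - fm i| ≤ C := fun i _ => hC _ (hmem _)
      have h2 := Finset.sum_le_card_nsmul _ _ _ hterm
      have h3 : (Bigm.card : ℝ) ≤ (k : ℝ) := by
        have h5 : Bigm.card ≤ k := by simpa using Finset.card_le_univ Bigm
        exact_mod_cast h5
      calc ∑ i ∈ Bigm, |(a (m i) : ℝ) - fm i| ≤ Bigm.card • C := h2
        _ = (Bigm.card : ℝ) * C := by rw [nsmul_eq_mul]
        _ ≤ (k : ℝ) * C := mul_le_mul_of_nonneg_right h3 (by linarith)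
    have hb2 : |∑ jj ∈ Bign, ((a (n jj) : ℝ) - fn jj)| ≤ (l : ℝ) * C := by
      refine (Finset.abs_sum_le_sum_abs _ _).trans ?_
      have hterm : ∀ jj ∈ Bign, |(a (n jj) : ℝ) - fn jj| ≤ C := fun jj _ => hC _ (hmem _)
      have h2 := Finset.sum_le_card_nsmul _ _ _ hterm
      have h3 : (Bign.card : ℝ) ≤ (l : ℝ) := by
        have h5 : Bign.card ≤ l := by simpa using Finset.card_le_univ Bign
        exact_mod_cast h5
      calc ∑ jj ∈ Bign, |(a (n jj) : ℝ) - fn jj| ≤ Bign.card • C := h2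
        _ = (Bign.card : ℝ) * C := by rw [nsmul_eq_mul]
        _ ≤ (l : ℝ) * C := mul_le_mul_of_nonneg_right h3 (by linarith)
    have hNC : (N : ℝ) * C = (k : ℝ) * C + (l : ℝ) * C := by rw [hNdef]; push_cast; ring
    have hceil : (N : ℝ) * C ≤ ((⌈(N : ℝ) * C⌉₊ : ℕ) : ℝ) := Nat.le_ceil _
    have hrabs : |((s' : ℤ) : ℝ)| ≤ ((⌈(N : ℝ) * C⌉₊ : ℕ) : ℝ) := by
      rw [hcast]
      have u1 := abs_le.1 hb1
      have u2 := abs_le.1 hb2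
      rw [abs_le]
      constructor <;> linarith [u1.1, u1.2, u2.1, u2.2]
    have : ((|s'| : ℤ) : ℝ) ≤ ((⌈(N : ℝ) * C⌉₊ : ℕ) : ℝ) := by
      rw [Int.cast_abs]
      exact hrabs
    exact_mod_cast this
  refine ⟨s', habs, Bigmᶜ, Bignᶜ, ?_, ?_, hor, ?_, ?_⟩
  · intro hcon
    have : Bigm = ∅ := by
      have := congrArg compl hcon
      rwa [compl_compl, Finset.compl_univ] at this
    exact hBm.ne_empty this
  · intro hcon
    have : Bign = ∅ := by
      have := congrArg compl hcon
      rwa [compl_compl, Finset.compl_univ] at this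
    exact hBn.ne_empty this
  · have em := Finset.sum_compl_add_sum Bigm (fun i => a (m i))
    have en := Finset.sum_compl_add_sum Bign (fun jj => a (n jj))
    have hrel' : r + ∑ i, a (m i) = ∑ jj, a (n jj) := hrel
    rw [hs']
    linarith
  · rw [compl_compl, compl_compl, hs']
    ring
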